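/- arXiv:1912.02103 — 4 statements merged into one kernel-verified Lean document; each statement's English description precedes it below -/
import Mathlib

section
/- Let B > 0, n ∈ ℕ, and equip the cube [0,B]^n ⊆ ℝ^n with the sup-metric. For k ∈ {1,…,n} let F_k^+ = {x ∈ [0,B]^n : x_k = B} and F_k^- = {x ∈ [0,B]^n : x_k = 0} be the corresponding pair of opposite faces. Let 0 < ε < B/6, let L be a subset of [0,B]^n, and let U be an ε-disjoint family of subsets of L with diam(U) ≤ B/3 for every U ∈ U. Then there exists an ε-partition L' of L between F_k^+ ∩ L and F_k^- ∩ L such that L' ⊆ L ∩ (⋃U)^c. -/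
open Metric Set Filter ENNReal

noncomputable section

namespace AsympPaper

/-- The distance between two subsets of a (pseudo)metric space,
`d(A,B) = inf {dist a b : a ∈ A, b ∈ B}`, valued in `ℝ≥0∞` (it is `∞` if `A` or `B` is empty). -/
def setEDist {X : Type*} [PseudoMetricSpace X] (A B : Set X) : ℝ≥0∞ :=
  ⨅ a ∈ A, ⨅ b ∈ B, edist a b

/-- A family `𝒰` of subsets of a metric space is `r`-disjoint if `d(U,V) > r`
for all distinct `U, V ∈ 𝒰`. -/
def RDisjoint {X : Type*} [PseudoMetricSpace X] (r : ℝ) (𝒰 : Set (Set X)) : Prop :=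
  ∀ U ∈ 𝒰, ∀ V ∈ 𝒰, U ≠ V → ENNReal.ofReal r < setEDist U V

/-- A family `𝒰` of subsets of a metric space is uniformly bounded if
`sup {diam U : U ∈ 𝒰} < ∞`. -/
def UniformlyBdd {X : Type*} [PseudoMetricSpace X] (𝒰 : Set (Set X)) : Prop :=
  ∃ R : ℝ, ∀ U ∈ 𝒰, ∀ x ∈ U, ∀ y ∈ U, dist x y ≤ R

/-- `Msub M σ` is the set `M^σ = {τ ∈ Fin ℕ : τ ∪ σ ∈ M and τ ∩ σ = ∅}`,
where `Fin ℕ` is the collection of finite nonempty subsets of `ℕ`. -/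
def Msub (M : Set (Finset ℕ)) (σ : Finset ℕ) : Set (Finset ℕ) :=
  {τ | τ.Nonempty ∧ τ ∪ σ ∈ M ∧ τ ∩ σ = ∅}

/-- `OrdLE M α` is the relation `Ord M ≤ α`:  `Ord ∅ = 0` (so `Ord ∅ ≤ α` always), and for
`M ≠ ∅`, `Ord M ≤ α` iff `Ord M^a < α` for every `a ∈ ℕ`. -/
def OrdLE (M : Set (Finset ℕ)) (α : Ordinal.{0}) : Prop :=
  M = ∅ ∨ ∀ a : ℕ, ∃ β : {β : Ordinal.{0} // β < α}, OrdLE (Msub M {a}) β.1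
termination_by α
decreasing_by exact β.2

/-- `Ord M < α`. -/
def OrdLT (M : Set (Finset ℕ)) (α : Ordinal.{0}) : Prop := ∃ β < α, OrdLE M β

/-- `Ord M = α`. -/
def OrdEq (M : Set (Finset ℕ)) (α : Ordinal.{0}) : Prop := OrdLE M α ∧ ¬ OrdLT M α

/-- `A(X)`: the set of finite nonempty `σ ⊆ ℕ` such that there are *no* uniformly bounded
families `𝒰 i` for `i ∈ σ`, each `𝒰 i` being `i`-disjoint, with `⋃_{i ∈ σ} 𝒰 i` covering `X`. -/
def AX (X : Type*) [PseudoMetricSpace X] : Set (Finset ℕ) :=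
  {σ | σ.Nonempty ∧ ¬ ∃ 𝒰 : ℕ → Set (Set X),
      (∀ i ∈ σ, UniformlyBdd (𝒰 i) ∧ RDisjoint (i : ℝ) (𝒰 i)) ∧
      ∀ x : X, ∃ i ∈ σ, ∃ U ∈ 𝒰 i, x ∈ U}

/-- `trasdim(X) ≤ γ`, i.e. `Ord A(X) ≤ γ`. -/
def TrasdimLE (X : Type*) [PseudoMetricSpace X] (γ : Ordinal.{0}) : Prop := OrdLE (AX X) γ

/-- `trasdim(X) = γ`, i.e. `Ord A(X) = γ`. -/
def TrasdimEq (X : Type*) [PseudoMetricSpace X] (γ : Ordinal.{0}) : Prop := OrdEq (AX X) γ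

/-- Auxiliary for `coasdim`: `CoasdimLEAux A lam n` says `coasdim(A) ≤ lam + n` where `lam` is
a limit ordinal or `0` and `n ∈ ℕ`: for every `r > 0` there are `r`-disjoint uniformly bounded
families `𝒰 0, …, 𝒰 n` of subsets of `A` such that `coasdim(A \ ⋃ i, ⋃₀ 𝒰 i) < lam`
(where `coasdim = -1` exactly for `∅`). -/
def CoasdimLEAux {X : Type*} [PseudoMetricSpace X] (A : Set X) (lam : Ordinal.{0}) (n : ℕ) :
    Prop :=
  ∀ r : ℝ, 0 < r → ∃ 𝒰 : Fin (n + 1) → Set (Set X),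
    (∀ i, (∀ U ∈ 𝒰 i, U ⊆ A) ∧ UniformlyBdd (𝒰 i) ∧ RDisjoint r (𝒰 i)) ∧
    ((A \ ⋃ i, ⋃₀ 𝒰 i) = ∅ ∨
      ∃ q : {q : Ordinal.{0} × ℕ // q.1 + q.2 < lam ∧ (q.1 = 0 ∨ Order.IsSuccLimit q.1)},
        CoasdimLEAux (A \ ⋃ i, ⋃₀ 𝒰 i) q.1.1 q.1.2)
termination_by lam
decreasing_by exact lt_of_le_of_lt le_self_add q.2.1

/-- `coasdim(A) ≤ γ` for a subset `A` of an ambient metric space (with the induced metric). -/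
def CoasdimLE {X : Type*} [PseudoMetricSpace X] (A : Set X) (γ : Ordinal.{0}) : Prop :=
  ∃ lam : Ordinal.{0}, ∃ n : ℕ, (lam = 0 ∨ Order.IsSuccLimit lam) ∧ γ = lam + n ∧ CoasdimLEAux A lam n

/-- `coasdim(A) = γ`. -/
def CoasdimEq {X : Type*} [PseudoMetricSpace X] (A : Set X) (γ : Ordinal.{0}) : Prop :=
  CoasdimLE A γ ∧ ∀ β < γ, ¬ CoasdimLE A β

/-- `1 + 2 + ⋯ + (i-1) = i(i-1)/2`, as a real number. -/
def triHalf (i : ℕ) : ℝ := ((i * (i - 1)) / 2 : ℕ)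

/-- The asymptotic union `as⊔_{i=1}^∞ Z_i` of a sequence of subspaces `Z_i = S i` of an ambient
metric space `Z` (indices with `S i = ∅` are vacuous; in particular take `S 0 = ∅` to start
the union at `i = 1`). A point is a pair `(i, x)` with `x ∈ S i`. -/
structure AsUnion {Z : Type*} (S : ℕ → Set Z) where
  idx : ℕ
  pt : S idx

/-- The metric of the asymptotic union: `d((l,x),(k,y)) = d_Z(x,y) + c` where, for `l ≤ k`,
`c = 0` if `l = k` and `c = l + (l+1) + ⋯ + (k-1)` if `l < k`. -/
instance AsUnion.instPseudoMetricSpace {Z : Type*} [PseudoMetricSpace Z] (S : ℕ → Set Z) :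
    PseudoMetricSpace (AsUnion S) where
  dist p q := dist (p.pt : Z) (q.pt : Z) + |triHalf p.idx - triHalf q.idx|
  dist_self p := by simp
  dist_comm p q := by
    show dist (p.pt : Z) (q.pt : Z) + |triHalf p.idx - triHalf q.idx|
      = dist (q.pt : Z) (p.pt : Z) + |triHalf q.idx - triHalf p.idx|
    rw [dist_comm, abs_sub_comm]
  dist_triangle p q r := by
    show dist (p.pt : Z) (r.pt : Z) + |triHalf p.idx - triHalf r.idx|
      ≤ (dist (p.pt : Z) (q.pt : Z) + |triHalf p.idx - triHalf q.idx|)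
        + (dist (q.pt : Z) (r.pt : Z) + |triHalf q.idx - triHalf r.idx|)
    have h1 := dist_triangle (p.pt : Z) (q.pt : Z) (r.pt : Z)
    have h2 := abs_sub_le (triHalf p.idx) (triHalf q.idx) (triHalf r.idx)
    linarith

/-- The ambient space `⊕ ℝ` of sequences, realized inside the bounded
functions `ℕ →ᵇ ℝ` with the sup-metric. -/
abbrev Amb : Type := BoundedContinuousFunction ℕ ℝ

/-- `t ∈ 2^n ℤ`. -/
def IsMultiple (n : ℕ) (t : ℝ) : Prop := ∃ m : ℤ, t = (m : ℝ) * 2 ^ n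

/-- `X_{ω+k}^{(i,n)} = {x ∈ ℝ^i : #{j : x_j ∉ 2^n ℤ} ≤ k}`, realized as the subset of `⊕ ℝ`
of sequences supported on the first `i` coordinates. -/
def XSet (k i n : ℕ) : Set Amb :=
  {f | (∀ j, i ≤ j → f j = 0) ∧ ({j | j < i ∧ ¬ IsMultiple n (f j)}).ncard ≤ k}

/-- `X_{ω+k} = as⊔_{i=1}^∞ X_{ω+k}^{(i)}` where `X_{ω+k}^{(i)} = X_{ω+k}^{(i,i)}`. -/
def XOmegaPlus (k : ℕ) : Type := AsUnion (fun i => if i = 0 then (∅ : Set Amb) else XSet k i i)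

instance (k : ℕ) : PseudoMetricSpace (XOmegaPlus k) :=
  AsUnion.instPseudoMetricSpace _

/-- `as⊔_{i=n}^∞ X_{ω+k}^{(i,n)}`. -/
def XTail (k n : ℕ) : Type := AsUnion (fun i => if i < n then (∅ : Set Amb) else XSet k i n)

instance (k n : ℕ) : PseudoMetricSpace (XTail k n) :=
  AsUnion.instPseudoMetricSpace _

/-- `Y_{ω+k}^{(i)} = {x ∈ (2^k ℤ)^i : #{j : x_j ∉ 2^i ℤ} ≤ k}` inside `⊕ ℝ`. -/
def YSet (k i : ℕ) : Set Amb :=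
  {f | (∀ j, i ≤ j → f j = 0) ∧ (∀ j, j < i → IsMultiple k (f j)) ∧
    ({j | j < i ∧ ¬ IsMultiple i (f j)}).ncard ≤ k}

/-- `Y_{ω+k} = as⊔_{i=1}^∞ Y_{ω+k}^{(i)}`. -/
def YOmegaPlus (k : ℕ) : Type := AsUnion (fun i => if i = 0 then (∅ : Set Amb) else YSet k i)

instance (k : ℕ) : PseudoMetricSpace (YOmegaPlus k) :=
  AsUnion.instPseudoMetricSpace _

/-- `ℝ^i` inside `⊕ ℝ`. -/
def RSet (i : ℕ) : Set Amb := {f | ∀ j, i ≤ j → f j = 0}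

/-- The ambient space `as⊔_{i=1}^∞ ℝ^i`. -/
def AsR : Type := AsUnion (fun i => if i = 0 then (∅ : Set Amb) else RSet i)

instance : PseudoMetricSpace AsR := AsUnion.instPseudoMetricSpace _

/-- `Y_{ω+k}` viewed as a subspace of `as⊔_{i=1}^∞ ℝ^i`. -/
def YSub (k : ℕ) : Set AsR := {p | (p.pt : Amb) ∈ YSet k p.idx}

/-- `Y_{2ω} = as⊔_{k=1}^∞ Y_{ω+k}`, the `Y_{ω+k}` being subspaces of `as⊔_{i=1}^∞ ℝ^i`. -/
def Y2Omega : Type := AsUnion (fun k => if k = 0 then (∅ : Set AsR) else YSub k)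

instance : PseudoMetricSpace Y2Omega := AsUnion.instPseudoMetricSpace _

/-- A family covers the space. -/
def Covers {X : Type*} (𝒰 : Set (Set X)) : Prop := ∀ x : X, ∃ U ∈ 𝒰, x ∈ U

/-- The Lebesgue number `L(𝒰) = inf_{x ∈ X} sup {r > 0 : ∃ U ∈ 𝒰, B(x,r) ⊆ U}`,
valued in `ℝ≥0∞`. -/
def lebesgueNum {X : Type*} [PseudoMetricSpace X] (𝒰 : Set (Set X)) : ℝ≥0∞ :=
  ⨅ x : X, sSup {e : ℝ≥0∞ | ∃ r : ℝ, 0 < r ∧ e = ENNReal.ofReal r ∧ ∃ U ∈ 𝒰, Metric.ball x r ⊆ U}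

/-- The multiplicity `m(𝒰)`: the maximal number of members of `𝒰` with nonempty
intersection, valued in `ℕ∞`. -/
def covMult {X : Type*} (𝒰 : Set (Set X)) : ℕ∞ :=
  sSup {m : ℕ∞ | ∃ t : Finset (Set X), ↑t ⊆ 𝒰 ∧ (⋂₀ (t : Set (Set X))).Nonempty ∧ m = t.card}

/-- The asymptotic dimension function
`ad_X(λ) = min {m(𝒰) : 𝒰 a uniformly bounded cover of X with L(𝒰) ≥ λ} - 1`. -/
def adim (X : Type*) [PseudoMetricSpace X] (lam : ℝ) : ℕ∞ :=
  sInf {m : ℕ∞ | ∃ 𝒰 : Set (Set X), UniformlyBdd 𝒰 ∧ Covers 𝒰 ∧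
    ENNReal.ofReal lam ≤ lebesgueNum 𝒰 ∧ m = covMult 𝒰} - 1

/-- `(2^k ℤ)^n` as a subset of `ℝ^n` (the latter carrying the sup-metric). -/
def grid (k n : ℕ) : Set (Fin n → ℝ) := {x | ∀ j, IsMultiple k (x j)}

/-- `g̃(r) = max {k ∈ ℕ : ad_{(2^k ℤ)^{g(r)}}(r) = g(r)}`. -/
def gtilde (g : ℝ → ℕ) (r : ℝ) : ℕ :=
  sSup {k : ℕ | adim (grid k (g r)) r = (g r : ℕ∞)}

/-- `(2^k ℤ)^n` realized inside `⊕ ℝ`: sequences supported on the first `n` coordinates,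
with those coordinates in `2^k ℤ`. -/
def gridSet (k n : ℕ) : Set Amb :=
  {f | (∀ j, n ≤ j → f j = 0) ∧ ∀ j, j < n → IsMultiple k (f j)}

/-- `X_ω(g) = as⊔_{i=1}^∞ (2^{g̃(i)} ℤ)^{g(i)}`. -/
def XOmegaG (g : ℝ → ℕ) : Type :=
  AsUnion (fun i => if i = 0 then (∅ : Set Amb) else gridSet (gtilde g (i : ℝ)) (g (i : ℝ)))

instance (g : ℝ → ℕ) : PseudoMetricSpace (XOmegaG g) := AsUnion.instPseudoMetricSpace _

/-- `f : X → Y` is a coarse equivalence: a coarse embedding with coarsely dense image. -/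
def IsCoarseEquiv {X Y : Type*} [PseudoMetricSpace X] [PseudoMetricSpace Y] (f : X → Y) : Prop :=
  (∃ p₁ p₂ : ℝ → ℝ, Monotone p₁ ∧ Monotone p₂ ∧
      Tendsto p₁ atTop atTop ∧ Tendsto p₂ atTop atTop ∧
      ∀ x₁ x₂ : X, p₁ (dist x₁ x₂) ≤ dist (f x₁) (f x₂) ∧ dist (f x₁) (f x₂) ≤ p₂ (dist x₁ x₂)) ∧
  ∃ R : ℝ, 0 < R ∧ ∀ y : Y, ∃ x : X, dist y (f x) < R

/-- A family `𝒳` (of subsets of an ambient space) is `r`-decomposable over a family `𝒴`: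
each `A ∈ 𝒳` splits as `A = A₀ ∪ A₁`, each `A_i` being an `r`-disjoint union of members
of a subfamily of `𝒴`. -/
def RDecomp {X : Type*} [PseudoMetricSpace X] (r : ℝ) (F G : Set (Set X)) : Prop :=
  ∀ A ∈ F, ∃ A₀ A₁ : Set X, A = A₀ ∪ A₁ ∧
    (∃ P ⊆ G, A₀ = ⋃₀ P ∧ RDisjoint r P) ∧
    (∃ P ⊆ G, A₁ = ⋃₀ P ∧ RDisjoint r P)

/-- `F ∈ D_α`, finite decomposition complexity: `D_0` consists of the bounded
families, and for `α > 0`, `F ∈ D_α` iff for every `r > 0` there are `β < α` and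
`G ∈ D_β` such that `F` is `r`-decomposable over `G`. -/
def InD {X : Type*} [PseudoMetricSpace X] (F : Set (Set X)) (α : Ordinal.{0}) : Prop :=
  if α = 0 then ∃ R : ℝ, ∀ A ∈ F, ∀ x ∈ A, ∀ y ∈ A, dist x y ≤ R
  else ∀ r : ℝ, 0 < r → ∃ β : {β : Ordinal.{0} // β < α},
    ∃ G : Set (Set X), InD G β.1 ∧ RDecomp r F G
termination_by α
decreasing_by exact β.2

end AsympPaper


open AsympPaper

/-- Let `B > 0`, `n ∈ ℕ`, and equip the cube `[0,B]^n ⊆ ℝ^n` with the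
sup-metric. For `k ∈ {1,…,n}` let `F_k^+`, `F_k^-` be the corresponding pair of opposite
faces. Let `0 < ε < B/6`, let `L ⊆ [0,B]^n`, and let `𝒰` be an `ε`-disjoint family of
subsets of `L` with `diam U ≤ B/3` for every `U ∈ 𝒰`. Then there exists an `ε`-partition
`L'` of `L` between `F_k^+ ∩ L` and `F_k^- ∩ L` such that `L' ⊆ L ∩ (⋃ 𝒰)ᶜ`. -/
theorem statement_0 (n : ℕ) (B : ℝ) (hB : 0 < B) (k : Fin n)
    (ε : ℝ) (hε : 0 < ε) (hεB : ε < B / 6)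
    (L : Set (Fin n → ℝ)) (hL : L ⊆ {x | ∀ j, x j ∈ Set.Icc 0 B})
    (𝒰 : Set (Set (Fin n → ℝ))) (h𝒰 : ∀ U ∈ 𝒰, U ⊆ L)
    (hdisj : RDisjoint ε 𝒰) (hbd : ∀ U ∈ 𝒰, Metric.diam U ≤ B / 3) :
    ∃ L' U W : Set (Fin n → ℝ),
      L' ⊆ L ∩ (⋃₀ 𝒰)ᶜ ∧
      (∃ U₀, IsOpen U₀ ∧ U = U₀ ∩ L) ∧ (∃ W₀, IsOpen W₀ ∧ W = W₀ ∩ L) ∧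
      {x | (∀ j, x j ∈ Set.Icc 0 B) ∧ x k = B} ∩ L ⊆ U ∧
      {x | (∀ j, x j ∈ Set.Icc 0 B) ∧ x k = 0} ∩ L ⊆ W ∧
      L = U ∪ L' ∪ W ∧ U ∩ L' = ∅ ∧ U ∩ W = ∅ ∧ L' ∩ W = ∅ ∧
      ENNReal.ofReal ε < setEDist L' ({x | (∀ j, x j ∈ Set.Icc 0 B) ∧ x k = B} ∩ L) ∧
      ENNReal.ofReal ε < setEDist L' ({x | (∀ j, x j ∈ Set.Icc 0 B) ∧ x k = 0} ∩ L) := by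
  classical
  set c : ℝ := min ε (B / 6 - ε) / 2 with hc
  have hmin1 := min_le_left ε (B / 6 - ε)
  have hmin2 := min_le_right ε (B / 6 - ε)
  have hminpos : 0 < min ε (B / 6 - ε) := lt_min hε (by linarith)
  have hc1 : 0 < c := by rw [hc]; linarith
  have hc2 : c + c ≤ ε := by rw [hc]; linarith
  have hc3 : ε + c < B / 6 := by rw [hc]; linarith
  -- members of 𝒰 reaching the upper half lie entirely in {x k ≥ B/6}
  have hup : ∀ V ∈ 𝒰, (∃ v ∈ V, B / 2 ≤ v k) → ∀ u ∈ V, B / 6 ≤ u k := by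
    intro V hV ⟨w, hw, hwk⟩ u hu
    have hVbd : Bornology.IsBounded V := by
      apply Metric.isBounded_iff.mpr
      refine ⟨B, fun {x} hx {y} hy => ?_⟩
      rw [dist_pi_le_iff hB.le]
      intro j
      have h1 := (hL (h𝒰 V hV hx)) j
      have h2 := (hL (h𝒰 V hV hy)) j
      rw [Real.dist_eq]
      exact abs_le.mpr ⟨by simp [Set.mem_Icc] at h1 h2; linarith,
        by simp [Set.mem_Icc] at h1 h2; linarith⟩
    have hd : dist u w ≤ B / 3 := le_trans (Metric.dist_le_diam_of_mem hVbd hu hw) (hbd V hV)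
    have hk : dist (u k) (w k) ≤ dist u w := dist_le_pi_dist u w k
    rw [Real.dist_eq] at hk
    have := abs_le.mp (hk.trans hd)
    linarith [this.1]
  set 𝒰p : Set (Set (Fin n → ℝ)) := {V | V ∈ 𝒰 ∧ ∃ v ∈ V, B / 2 ≤ v k} with h𝒰p
  set U₀ : Set (Fin n → ℝ) := {x | B / 2 + c < x k} ∪ Metric.thickening c (⋃₀ 𝒰p) with hU₀
  set W₀ : Set (Fin n → ℝ) :=
    {x | x k < B / 6 - c} ∪ Metric.thickening c (⋃₀ (𝒰 \ 𝒰p)) with hW₀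
  -- U₀ and W₀ are disjoint
  have hUW : ∀ x, x ∈ U₀ → x ∈ W₀ → False := by
    intro x hxU hxW
    rcases hxU with hxU | hxU
    · rcases hxW with hxW | hxW
      · simp only [Set.mem_setOf_eq] at hxU hxW
        linarith
      · obtain ⟨z, hz, hdz⟩ := Metric.mem_thickening_iff.mp hxW
        obtain ⟨V, hV, hzV⟩ := hz
        have hzk : z k < B / 2 := by
          by_contra h
          exact hV.2 ⟨hV.1, z, hzV, le_of_not_gt h⟩
        have : dist (x k) (z k) ≤ dist x z := dist_le_pi_dist x z k
        rw [Real.dist_eq] at this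
        have := abs_le.mp (this.trans hdz.le)
        simp only [Set.mem_setOf_eq] at hxU
        linarith [this.1]
    · obtain ⟨z, hz, hdz⟩ := Metric.mem_thickening_iff.mp hxU
      obtain ⟨V, hV, hzV⟩ := hz
      have hzk : B / 6 ≤ z k := hup V hV.1 hV.2 z hzV
      rcases hxW with hxW | hxW
      · have : dist (x k) (z k) ≤ dist x z := dist_le_pi_dist x z k
        rw [Real.dist_eq] at this
        have := abs_le.mp (this.trans hdz.le)
        simp only [Set.mem_setOf_eq] at hxW
        linarith [this.2]
      · obtain ⟨z', hz', hdz'⟩ := Metric.mem_thickening_iff.mp hxW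
        obtain ⟨V', hV', hzV'⟩ := hz'
        have hne : V ≠ V' := fun h => hV'.2 (h ▸ hV)
        have hlt := hdisj V hV.1 V' hV'.1 hne
        have hle : setEDist V V' ≤ edist z z' :=
          le_trans (iInf₂_le z hzV) (iInf₂_le z' hzV')
        rw [edist_dist] at hle
        have hdd : dist z z' ≤ ε := by
          have := dist_triangle z x z'
          rw [dist_comm z x] at this
          linarith
        have : setEDist V V' ≤ ENNReal.ofReal ε :=
          hle.trans (ENNReal.ofReal_le_ofReal hdd)
        exact absurd (lt_of_lt_of_le hlt this) (lt_irrefl _)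
  refine ⟨L \ (U₀ ∪ W₀), U₀ ∩ L, W₀ ∩ L, ?_, ⟨U₀, ?_, rfl⟩, ⟨W₀, ?_, rfl⟩,
    ?_, ?_, ?_, ?_, ?_, ?_, ?_, ?_⟩
  · -- L' avoids ⋃₀ 𝒰
    rintro x ⟨hxL, hx⟩
    refine ⟨hxL, fun hxu => ?_⟩
    obtain ⟨V, hV, hxV⟩ := hxu
    by_cases hVp : V ∈ 𝒰p
    · exact hx (Or.inl (Or.inr (Metric.self_subset_thickening hc1 _ ⟨V, hVp, hxV⟩)))
    · exact hx (Or.inr (Or.inr (Metric.self_subset_thickening hc1 _ ⟨V, ⟨hV, hVp⟩, hxV⟩)))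
  · exact (isOpen_lt continuous_const (continuous_apply k)).union Metric.isOpen_thickening
  · exact (isOpen_lt (continuous_apply k) continuous_const).union Metric.isOpen_thickening
  · -- top face in U
    rintro x ⟨⟨hxc, hxk⟩, hxL⟩
    exact ⟨Or.inl (by simp only [Set.mem_setOf_eq, hxk]; linarith), hxL⟩
  · -- bottom face in W
    rintro x ⟨⟨hxc, hxk⟩, hxL⟩
    refine ⟨Or.inl (by simp only [Set.mem_setOf_eq, hxk]; linarith), hxL⟩
  · -- L = U ∪ L' ∪ W
    ext x
    simp only [Set.mem_union, Set.mem_inter_iff, Set.mem_diff, Set.mem_union]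
    constructor
    · intro hxL
      by_cases h1 : x ∈ U₀
      · exact Or.inl (Or.inl ⟨h1, hxL⟩)
      · by_cases h2 : x ∈ W₀
        · exact Or.inr ⟨h2, hxL⟩
        · exact Or.inl (Or.inr ⟨hxL, fun h => h.elim h1 h2⟩)
    · rintro ((⟨_, h⟩ | ⟨h, _⟩) | ⟨_, h⟩) <;> exact h
  · -- U ∩ L' = ∅
    rw [Set.eq_empty_iff_forall_notMem]
    rintro x ⟨⟨hU, -⟩, -, hn⟩
    exact hn (Or.inl hU)
  · -- U ∩ W = ∅
    rw [Set.eq_empty_iff_forall_notMem]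
    rintro x ⟨⟨hU, -⟩, hW, -⟩
    exact hUW x hU hW
  · -- L' ∩ W = ∅
    rw [Set.eq_empty_iff_forall_notMem]
    rintro x ⟨⟨-, hn⟩, hW, -⟩
    exact hn (Or.inr hW)
  · -- distance from L' to top face
    have hεlt : ε < B / 2 - c := by linarith
    refine lt_of_lt_of_le (ENNReal.ofReal_lt_ofReal_iff (by linarith)|>.mpr hεlt) ?_
    refine le_iInf₂ fun a ha => le_iInf₂ fun b hb => ?_
    rw [edist_dist]
    apply ENNReal.ofReal_le_ofReal
    have hak : a k ≤ B / 2 + c := by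
      by_contra h
      exact ha.2 (Or.inl (Or.inl (lt_of_not_ge h)))
    have hbk : b k = B := hb.1.2
    have : dist (a k) (b k) ≤ dist a b := dist_le_pi_dist a b k
    rw [Real.dist_eq, hbk] at this
    have h2 : B / 2 - c ≤ |a k - B| := by
      rw [abs_sub_comm]
      refine le_trans ?_ (le_abs_self _)
      linarith
    linarith
  · -- distance from L' to bottom face
    have hεlt : ε < B / 6 - c := by linarith
    refine lt_of_lt_of_le (ENNReal.ofReal_lt_ofReal_iff (by linarith)|>.mpr hεlt) ?_
    refine le_iInf₂ fun a ha => le_iInf₂ fun b hb => ?_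
    rw [edist_dist]
    apply ENNReal.ofReal_le_ofReal
    have hak : B / 6 - c ≤ a k := by
      by_contra h
      exact ha.2 (Or.inr (Or.inl (lt_of_not_ge h)))
    have hbk : b k = 0 := hb.1.2
    have : dist (a k) (b k) ≤ dist a b := dist_le_pi_dist a b k
    rw [Real.dist_eq, hbk, sub_zero] at this
    linarith [le_abs_self (a k)]

end
end

section
/- Let M ⊆ Fin ℕ, let k ∈ ℕ ∪ {0}, and let α be an infinite ordinal. Then Ord M ≤ α + k if and only if Ord M^τ < α for every τ ∈ Fin ℕ with |τ| = k + 1. -/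
open Metric Set Filter ENNReal

noncomputable section

open AsympPaper

theorem ordLE_def' (M : Set (Finset ℕ)) (α : Ordinal.{0}) :
    OrdLE M α ↔ M = ∅ ∨ ∀ a : ℕ, ∃ β < α, OrdLE (Msub M {a}) β := by
  rw [OrdLE]
  constructor
  · rintro (h | h)
    · exact Or.inl h
    · exact Or.inr fun a => ⟨(h a).choose.1, (h a).choose.2, (h a).choose_spec⟩
  · rintro (h | h)
    · exact Or.inl h
    · refine Or.inr fun a => ?_
      obtain ⟨β, hβ, hle⟩ := h a
      exact ⟨⟨β, hβ⟩, hle⟩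

theorem msub_empty (σ : Finset ℕ) : Msub ∅ σ = ∅ := by
  ext τ; simp [Msub]

theorem ordLE_empty (α : Ordinal.{0}) : OrdLE ∅ α := (ordLE_def' ∅ α).mpr (Or.inl rfl)

theorem ordLT_empty {α : Ordinal.{0}} (h : 0 < α) : OrdLT ∅ α := ⟨0, h, ordLE_empty 0⟩

theorem ordLE_mono {M : Set (Finset ℕ)} {β γ : Ordinal.{0}} (hβγ : β ≤ γ)
    (h : OrdLE M β) : OrdLE M γ := by
  rw [ordLE_def'] at h ⊢
  rcases h with h | h
  · exact Or.inl h
  · refine Or.inr fun a => ?_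
    obtain ⟨δ, hδ, hle⟩ := h a
    exact ⟨δ, lt_of_lt_of_le hδ hβγ, hle⟩

theorem ordLE_succ_iff (M : Set (Finset ℕ)) (γ : Ordinal.{0}) :
    OrdLE M (γ + 1) ↔ ∀ a : ℕ, OrdLE (Msub M {a}) γ := by
  rw [ordLE_def']
  constructor
  · rintro (rfl | h) a
    · rw [msub_empty]; exact ordLE_empty γ
    · obtain ⟨β, hβ, hle⟩ := h a
      rw [Ordinal.add_one_eq_succ, Order.lt_succ_iff] at hβ
      exact ordLE_mono hβ hle
  · intro h
    exact Or.inr fun a => ⟨γ, lt_add_one γ, h a⟩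

theorem msub_msub (M : Set (Finset ℕ)) {a : ℕ} {σ : Finset ℕ} (ha : a ∉ σ) :
    Msub (Msub M {a}) σ = Msub M (insert a σ) := by
  ext τ
  simp only [Msub, Set.mem_setOf_eq]
  constructor
  · rintro ⟨hne, ⟨hne', hmem, hint'⟩, hint⟩
    have haτ : a ∉ τ ∪ σ := by
      intro hmem'
      have : a ∈ (τ ∪ σ) ∩ {a} := Finset.mem_inter.mpr ⟨hmem', Finset.mem_singleton_self a⟩
      rw [hint'] at this
      exact absurd this (Finset.notMem_empty a)
    refine ⟨hne, ?_, ?_⟩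
    · have : (τ ∪ σ) ∪ {a} = τ ∪ insert a σ := by
        ext x
        simp only [Finset.mem_union, Finset.mem_insert, Finset.mem_singleton]
        tauto
      rwa [this, Finset.insert_eq] at hmem
    · ext x
      simp only [Finset.mem_inter, Finset.mem_insert, Finset.notMem_empty, iff_false]
      rintro ⟨hxτ, rfl | hxσ⟩
      · exact haτ (Finset.mem_union_left σ hxτ)
      · have : x ∈ τ ∩ σ := Finset.mem_inter.mpr ⟨hxτ, hxσ⟩
        rw [hint] at this
        exact absurd this (Finset.notMem_empty x)
  · rintro ⟨hne, hmem, hint⟩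
    have haτ : a ∉ τ := by
      intro h
      have : a ∈ τ ∩ insert a σ := Finset.mem_inter.mpr ⟨h, Finset.mem_insert_self a σ⟩
      rw [hint] at this
      exact absurd this (Finset.notMem_empty a)
    have hτσ : τ ∩ σ = ∅ := by
      ext x
      simp only [Finset.mem_inter, Finset.notMem_empty, iff_false]
      rintro ⟨hxτ, hxσ⟩
      have : x ∈ τ ∩ insert a σ :=
        Finset.mem_inter.mpr ⟨hxτ, Finset.mem_insert_of_mem hxσ⟩
      rw [hint] at this
      exact absurd this (Finset.notMem_empty x)
    refine ⟨hne, ⟨hne.mono Finset.subset_union_left, ?_, ?_⟩, hτσ⟩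
    · have : (τ ∪ σ) ∪ {a} = τ ∪ insert a σ := by
        ext x
        simp only [Finset.mem_union, Finset.mem_insert, Finset.mem_singleton]
        tauto
      rw [this]
      exact hmem
    · ext x
      simp only [Finset.mem_inter, Finset.mem_union, Finset.mem_singleton,
        Finset.notMem_empty, iff_false]
      rintro ⟨hxτ | hxσ, rfl⟩
      · exact haτ hxτ
      · exact ha hxσ

theorem msub_msub_mem (M : Set (Finset ℕ)) {a : ℕ} {σ : Finset ℕ} (ha : a ∈ σ) :
    Msub (Msub M {a}) σ = ∅ := by
  ext τ
  simp only [Msub, Set.mem_setOf_eq, Set.mem_empty_iff_false, iff_false]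
  rintro ⟨hne, ⟨hne', hmem, hint'⟩, hint⟩
  have : a ∈ (τ ∪ σ) ∩ {a} :=
    Finset.mem_inter.mpr ⟨Finset.mem_union_right τ ha, Finset.mem_singleton_self a⟩
  rw [hint'] at this
  exact absurd this (Finset.notMem_empty a)

/-- Let `M ⊆ Fin ℕ`, `k ∈ ℕ ∪ {0}`, and let `α` be an infinite ordinal.
Then `Ord M ≤ α + k` iff `Ord M^τ < α` for every `τ ∈ Fin ℕ` with `|τ| = k + 1`. -/
theorem statement_1 (M : Set (Finset ℕ)) (hM : ∀ σ ∈ M, σ.Nonempty)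
    (k : ℕ) (α : Ordinal.{0}) (hα : Ordinal.omega0 ≤ α) :
    OrdLE M (α + k) ↔
      ∀ τ : Finset ℕ, τ.Nonempty → τ.card = k + 1 → OrdLT (Msub M τ) α := by
  have hpos : (0 : Ordinal.{0}) < α := lt_of_lt_of_le Ordinal.omega0_pos hα
  induction k generalizing M with
  | zero =>
    rw [Nat.cast_zero, add_zero, ordLE_def']
    constructor
    · rintro (rfl | h) τ hne hcard
      · rw [msub_empty]; exact ordLT_empty hpos
      · obtain ⟨a, rfl⟩ := Finset.card_eq_one.mp hcard
        exact h a
    · intro h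
      exact Or.inr fun a => h {a} (Finset.singleton_nonempty a) (Finset.card_singleton a)
  | succ k ih =>
    have hstep : α + ((k + 1 : ℕ) : Ordinal.{0}) = (α + (k : ℕ)) + 1 := by
      push_cast
      rw [add_assoc]
    rw [hstep, ordLE_succ_iff]
    constructor
    · intro h τ hne hcard
      obtain ⟨a, ha⟩ := hne
      have hσcard : (τ.erase a).card = k + 1 := by
        rw [Finset.card_erase_of_mem ha, hcard]
        omega
      have hσne : (τ.erase a).Nonempty := Finset.card_pos.mp (by omega)
      have haσ : a ∉ τ.erase a := Finset.notMem_erase a τ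
      have := (ih (Msub M {a}) (fun σ hσ => hσ.1)).mp (h a) (τ.erase a) hσne hσcard
      rwa [msub_msub M haσ, Finset.insert_erase ha] at this
    · intro h a
      refine (ih (Msub M {a}) (fun σ hσ => hσ.1)).mpr fun σ hσne hσcard => ?_
      by_cases haσ : a ∈ σ
      · rw [msub_msub_mem M haσ]
        exact ordLT_empty hpos
      · rw [msub_msub M haσ]
        exact h (insert a σ) ⟨a, Finset.mem_insert_self a σ⟩
          (by rw [Finset.card_insert_of_notMem haσ, hσcard])

end
end

section
/- For every k ∈ ℕ and every natural number r > 1, taking n = 3^{k−1} r, there exist r-disjoint uniformly bounded families U_0, U_1, …, U_k of subsets of as⊔_{i=n}^∞ X_{ω+k}^{(i,n)} such that U_0 ∪ U_1 ∪ ⋯ ∪ U_k covers as⊔_{i=n}^∞ X_{ω+k}^{(i,n)}. -/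
open Metric Set Filter ENNReal

noncomputable section

open AsympPaper

namespace Statement4Proof
open AsympPaper

/-- Period of the window pattern. -/
def Pc (k n : ℕ) : ℝ := ((k : ℝ) + 1) * 2 ^ n
/-- Gap length. -/
def Gc (r : ℕ) : ℝ := (r : ℝ) + 1 / 2
/-- Offset of the gaps of family `c`. -/
def oc (n c : ℕ) : ℝ := (c : ℝ) * 2 ^ n + 1 / 4

lemma Pc_pos (k n : ℕ) : 0 < Pc k n := by unfold Pc; positivity
lemma Gc_pos (r : ℕ) : 0 < Gc r := by unfold Gc; positivity

/-- `t` lies in a gap of family `c`. -/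
def InGap (k n r c : ℕ) (t : ℝ) : Prop :=
  ∃ m : ℤ, (m : ℝ) * Pc k n + oc n c < t ∧ t < (m : ℝ) * Pc k n + oc n c + Gc r

/-- `t` lies in window `m` of family `c`. -/
def InWin (k n r c : ℕ) (m : ℤ) (t : ℝ) : Prop :=
  (m : ℝ) * Pc k n + oc n c + Gc r ≤ t ∧ t ≤ ((m : ℝ) + 1) * Pc k n + oc n c

lemma two_pow_ge (n : ℕ) : (n : ℝ) + 1 ≤ 2 ^ n := by
  exact_mod_cast Nat.succ_le_of_lt (Nat.lt_two_pow_self (n := n))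

lemma grid_not_inGap {k n r : ℕ} (hrn : r ≤ n) {c : ℕ} (hc : c ≤ k) (z : ℤ) :
    ¬ InGap k n r c ((z : ℝ) * 2 ^ n) := by
  rintro ⟨m, h1, h2⟩
  have hN : (r : ℝ) + 1 ≤ 2 ^ n := by
    have : (r : ℝ) ≤ n := by exact_mod_cast hrn
    linarith [two_pow_ge n]
  have e : ((z - m * (k + 1) - c : ℤ) : ℝ) * 2 ^ n
      = (z : ℝ) * 2 ^ n - ((m : ℝ) * Pc k n + (c : ℝ) * 2 ^ n) := by
    push_cast [Pc]; ring
  simp only [oc, Gc] at h1 h2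
  rcases le_or_gt (z - m * (k + 1) - c) 0 with h | h
  · have : ((z - m * (k + 1) - c : ℤ) : ℝ) * 2 ^ n ≤ 0 := by
      apply mul_nonpos_of_nonpos_of_nonneg
      · exact_mod_cast h
      · positivity
    rw [e] at this; linarith
  · have h1' : (1 : ℝ) ≤ ((z - m * (k + 1) - c : ℤ) : ℝ) := by exact_mod_cast h
    have : (2 : ℝ) ^ n ≤ ((z - m * (k + 1) - c : ℤ) : ℝ) * 2 ^ n := by
      nlinarith [pow_pos (by norm_num : (0:ℝ) < 2) n]
    rw [e] at this; linarith

lemma gap_disjoint {k n r : ℕ} (hrn : r ≤ n) {c c' : ℕ} (hc : c ≤ k) (hc' : c' ≤ k) {t : ℝ}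
    (h : InGap k n r c t) (h' : InGap k n r c' t) : c = c' := by
  obtain ⟨m, h1, h2⟩ := h; obtain ⟨m', h1', h2'⟩ := h'
  have hN : (r : ℝ) + 1 ≤ 2 ^ n := by
    have : (r : ℝ) ≤ n := by exact_mod_cast hrn
    linarith [two_pow_ge n]
  set D : ℤ := (m - m') * (k + 1) + c - c' with hD
  have e : ((D : ℤ) : ℝ) * 2 ^ n
      = ((m : ℝ) * Pc k n + oc n c) - ((m' : ℝ) * Pc k n + oc n c') := by
    push_cast [Pc, oc, hD]; ring
  have habs : |(D : ℝ) * 2 ^ n| < Gc r := by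
    rw [abs_lt]; constructor <;> rw [e] <;> unfold Gc at * <;> linarith
  have hD0 : D = 0 := by
    by_contra hne
    have h1a : (1 : ℤ) ≤ |D| := Int.one_le_abs hne
    have h1r : (1 : ℝ) ≤ |(D : ℝ)| := by exact_mod_cast h1a
    have hpow : (0 : ℝ) < 2 ^ n := by positivity
    have : (2 : ℝ) ^ n ≤ |(D : ℝ) * 2 ^ n| := by
      rw [abs_mul, abs_of_nonneg (le_of_lt hpow)]
      nlinarith
    unfold Gc at habs; linarith
  have hq : (m - m') * ((k : ℤ) + 1) = (c' : ℤ) - c := by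
    have : ((m - m') * (k + 1) + c - c' : ℤ) = 0 := hD0
    push_cast at this ⊢
    linarith
  have hq0 : m - m' = 0 := by
    by_contra hne
    have h1a : (1 : ℤ) ≤ |m - m'| := Int.one_le_abs hne
    have h2a : |(m - m') * ((k : ℤ) + 1)| = |m - m'| * ((k : ℤ) + 1) := by
      rw [abs_mul, abs_of_nonneg (show (0:ℤ) ≤ (k : ℤ) + 1 by positivity)]
    have h3a : ((k : ℤ) + 1) ≤ |m - m'| * ((k : ℤ) + 1) := by nlinarith
    rw [hq] at h2a
    have h4a : |(c' : ℤ) - c| ≤ k := by rw [abs_le]; omega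
    linarith [h2a, h3a, h4a]
  rw [hq0, zero_mul] at hq
  omega

lemma win_exists {k n r : ℕ} {c : ℕ} {t : ℝ} (h : ¬ InGap k n r c t) :
    InWin k n r c ⌊(t - oc n c - Gc r) / Pc k n⌋ t := by
  have hP := Pc_pos k n
  set q := ⌊(t - oc n c - Gc r) / Pc k n⌋ with hqdef
  have h1 : (q : ℝ) ≤ (t - oc n c - Gc r) / Pc k n := Int.floor_le _
  have h2 : (t - oc n c - Gc r) / Pc k n < (q : ℝ) + 1 := Int.lt_floor_add_one _
  have l1 : (q : ℝ) * Pc k n + oc n c + Gc r ≤ t := by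
    have := (le_div_iff₀ hP).mp h1; linarith
  have l2 : t < ((q : ℝ) + 1) * Pc k n + oc n c + Gc r := by
    have := (div_lt_iff₀ hP).mp h2; linarith
  refine ⟨l1, ?_⟩
  by_contra hgt
  push_neg at hgt
  exact h ⟨q + 1, by push_cast; linarith, by push_cast; linarith⟩

lemma win_sep {k n r : ℕ} {c : ℕ} {m m' : ℤ} {x y : ℝ} (hmm : m ≠ m')
    (hx : InWin k n r c m x) (hy : InWin k n r c m' y) : Gc r ≤ |x - y| := by
  have hP := le_of_lt (Pc_pos k n)
  have core : ∀ (a b : ℤ) (u v : ℝ), a < b → InWin k n r c a u → InWin k n r c b v →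
      Gc r ≤ v - u := by
    intro a b u v hab ⟨_, hu2⟩ ⟨hv1, _⟩
    have hcast : (a : ℝ) + 1 ≤ (b : ℝ) := by exact_mod_cast hab
    have : ((a : ℝ) + 1) * Pc k n ≤ (b : ℝ) * Pc k n :=
      mul_le_mul_of_nonneg_right hcast hP
    linarith
  rcases lt_or_gt_of_ne hmm with h | h
  · have := core m m' x y h hx hy
    rw [abs_sub_comm, abs_of_nonneg (by linarith [Gc_pos r])]; linarith
  · have := core m' m y x h hy hx
    rw [abs_of_nonneg (by linarith [Gc_pos r])]; linarith

lemma win_diam {k n r : ℕ} {c : ℕ} {m : ℤ} {x y : ℝ}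
    (hx : InWin k n r c m x) (hy : InWin k n r c m y) : |x - y| ≤ Pc k n := by
  obtain ⟨hx1, hx2⟩ := hx; obtain ⟨hy1, hy2⟩ := hy
  have hG := Gc_pos r
  rw [abs_le]; constructor <;> nlinarith

lemma triHalf_eq_sum (m : ℕ) : triHalf m = ((∑ i ∈ Finset.range m, i : ℕ) : ℝ) := by
  unfold AsympPaper.triHalf
  congr 1
  have h := Finset.sum_range_id_mul_two m
  set s := ∑ i ∈ Finset.range m, i
  set p := m * (m - 1)
  omega

lemma triHalf_succ (m : ℕ) : triHalf (m + 1) = triHalf m + m := by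
  rw [triHalf_eq_sum, triHalf_eq_sum, Finset.sum_range_succ]
  push_cast; ring

lemma triHalf_mono {i j : ℕ} (h : i ≤ j) : triHalf i ≤ triHalf j := by
  rw [triHalf_eq_sum, triHalf_eq_sum]
  exact_mod_cast Finset.sum_le_sum_of_subset (Finset.range_subset_range.mpr h)

lemma tri_gap {i i' : ℕ} (h : i < i') : (i' : ℝ) - 1 ≤ triHalf i' - triHalf i := by
  obtain ⟨j, rfl⟩ : ∃ j, i' = j + 1 := ⟨i' - 1, by omega⟩
  have e := triHalf_succ j
  have mono := triHalf_mono (show i ≤ j by omega)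
  push_cast; linarith

lemma bl_tri {n i i' : ℕ} (hi : n ≤ i) (hi' : n ≤ i')
    (hb : (if i ≤ n + 1 then n else i) = (if i' ≤ n + 1 then n else i')) :
    |triHalf i - triHalf i'| ≤ n := by
  rcases le_or_gt i (n + 1) with h1 | h1 <;> rcases le_or_gt i' (n + 1) with h2 | h2
  · have e := triHalf_succ n
    have d1 : i = n ∨ i = n + 1 := by omega
    have d2 : i' = n ∨ i' = n + 1 := by omega
    have hnn : (0:ℝ) ≤ n := by positivity
    rcases d1 with rfl | rfl <;> rcases d2 with rfl | rfl <;>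
      rw [abs_le] <;> constructor <;> push_cast <;> linarith
  · rw [if_pos h1, if_neg (show ¬ i' ≤ n + 1 by omega)] at hb; omega
  · rw [if_neg (show ¬ i ≤ n + 1 by omega), if_pos h2] at hb; omega
  · rw [if_neg (show ¬ i ≤ n + 1 by omega), if_neg (show ¬ i' ≤ n + 1 by omega)] at hb
    subst hb; simp

lemma bl_tri_ne {n i i' : ℕ} (hi : n ≤ i) (hi' : n ≤ i')
    (hb : (if i ≤ n + 1 then n else i) ≠ (if i' ≤ n + 1 then n else i')) :
    (n : ℝ) + 1 ≤ |triHalf i - triHalf i'| := by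
  have core : ∀ a b : ℕ, n ≤ a → a < b →
      (if a ≤ n + 1 then n else a) ≠ (if b ≤ n + 1 then n else b) →
      (n : ℝ) + 1 ≤ triHalf b - triHalf a := by
    intro a b ha hab hne
    rcases le_or_gt b (n + 1) with h2 | h2
    · exfalso
      apply hne
      rw [if_pos (show a ≤ n + 1 by omega), if_pos h2]
    · have := tri_gap hab
      have : ((n : ℝ) + 2) - 1 ≤ triHalf b - triHalf a := by
        have hcast : (n : ℝ) + 2 ≤ b := by exact_mod_cast h2
        linarith [tri_gap hab]
      linarith
  rcases lt_trichotomy i i' with h | h | h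
  · have := core i i' hi h hb
    rw [abs_sub_comm, abs_of_nonneg (by linarith)]; linarith
  · subst h; exact absurd rfl hb
  · have := core i' i hi' h (Ne.symm hb)
    rw [abs_of_nonneg (by linarith)]; linarith

end Statement4Proof

namespace Statement4Proof
open AsympPaper

def idxOf {k n : ℕ} (x : XTail k n) : ℕ := AsUnion.idx x
def ptOf {k n : ℕ} (x : XTail k n) : Amb := (AsUnion.pt x : Amb)

/-- The basic sets of the cover: a block of piece indices together with a choice of
window (of family `c`) for every coordinate. -/
def SetF (k n r c b : ℕ) (μ : ℕ → ℤ) : Set (XTail k n) :=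
  {x | (if idxOf x ≤ n + 1 then n else idxOf x) = b ∧ ∀ j, InWin k n r c (μ j) (ptOf x j)}

end Statement4Proof


open Statement4Proof in
/-- For every `k ∈ ℕ` (`k ≥ 1`) and every natural `r > 1`, taking
`n = 3^(k-1) * r`, there exist `r`-disjoint uniformly bounded families `𝒰 0, …, 𝒰 k` of
subsets of `as⊔_{i=n}^∞ X_{ω+k}^{(i,n)}` whose union covers it. -/
theorem statement_4 (k : ℕ) (hk : 1 ≤ k) (r : ℕ) (hr : 1 < r) :
    ∃ 𝒰 : Fin (k + 1) → Set (Set (XTail k (3 ^ (k - 1) * r))),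
      (∀ i, UniformlyBdd (𝒰 i) ∧ RDisjoint (r : ℝ) (𝒰 i)) ∧
      ∀ x : XTail k (3 ^ (k - 1) * r), ∃ i, ∃ U ∈ 𝒰 i, x ∈ U := by
  classical
  set n : ℕ := 3 ^ (k - 1) * r with hn
  have hrn : r ≤ n := by
    have h1 : 1 ≤ 3 ^ (k - 1) := Nat.one_le_pow _ _ (by norm_num)
    calc r = 1 * r := (one_mul r).symm
      _ ≤ 3 ^ (k - 1) * r := Nat.mul_le_mul_right r h1
  have hidx : ∀ x : XTail k n, n ≤ idxOf x ∧ ptOf x ∈ XSet k (idxOf x) n := by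
    intro x
    have h2 : ptOf x ∈ (if idxOf x < n then (∅ : Set Amb) else XSet k (idxOf x) n) :=
      (AsUnion.pt x).2
    by_cases h : idxOf x < n
    · rw [if_pos h] at h2; exact absurd h2 (Set.notMem_empty _)
    · rw [if_neg h] at h2; exact ⟨le_of_not_gt h, h2⟩
  have hdist : ∀ x y : XTail k n,
      dist x y = dist (ptOf x) (ptOf y) + |triHalf (idxOf x) - triHalf (idxOf y)| :=
    fun _ _ => rfl
  refine ⟨fun c => {U | ∃ (b : ℕ) (μ : ℕ → ℤ), U = SetF k n r (c : ℕ) b μ},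
    fun c => ⟨?_, ?_⟩, ?_⟩
  · -- uniformly bounded
    refine ⟨Pc k n + n, ?_⟩
    rintro U ⟨b, μ, rfl⟩ x hx y hy
    obtain ⟨hbx, hwx⟩ := hx
    obtain ⟨hby, hwy⟩ := hy
    rw [hdist]
    have hA : dist (ptOf x) (ptOf y) ≤ Pc k n := by
      rw [BoundedContinuousFunction.dist_le (le_of_lt (Pc_pos k n))]
      intro j
      rw [Real.dist_eq]
      exact win_diam (hwx j) (hwy j)
    have hT : |triHalf (idxOf x) - triHalf (idxOf y)| ≤ n :=
      bl_tri (hidx x).1 (hidx y).1 (hbx.trans hby.symm)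
    linarith
  · -- r-disjoint
    rintro U ⟨b, μ, rfl⟩ V ⟨b', μ', rfl⟩ hUV
    have key : ∀ x ∈ SetF k n r (c : ℕ) b μ, ∀ y ∈ SetF k n r (c : ℕ) b' μ',
        (r : ℝ) + 1 / 2 ≤ dist x y := by
      rintro x ⟨hbx, hwx⟩ y ⟨hby, hwy⟩
      rw [hdist]
      by_cases hbb : b = b'
      · have hμ : μ ≠ μ' := fun h => hUV (by rw [hbb, h])
        obtain ⟨j0, hj0⟩ := Function.ne_iff.mp hμ
        have hsep : Gc r ≤ |ptOf x j0 - ptOf y j0| := win_sep hj0 (hwx j0) (hwy j0)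
        have hco : |ptOf x j0 - ptOf y j0| ≤ dist (ptOf x) (ptOf y) := by
          rw [← Real.dist_eq]
          exact BoundedContinuousFunction.dist_coe_le_dist j0
        have habs : (0 : ℝ) ≤ |triHalf (idxOf x) - triHalf (idxOf y)| := abs_nonneg _
        unfold Gc at hsep
        linarith
      · have hT := bl_tri_ne (n := n) (hidx x).1 (hidx y).1 (by rw [hbx, hby]; exact hbb)
        have h0 : (0 : ℝ) ≤ dist (ptOf x) (ptOf y) := dist_nonneg
        have hnr : (r : ℝ) ≤ n := by exact_mod_cast hrn
        linarith
    have hle : ENNReal.ofReal ((r : ℝ) + 1 / 2)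
        ≤ setEDist (SetF k n r (c : ℕ) b μ) (SetF k n r (c : ℕ) b' μ') := by
      unfold AsympPaper.setEDist
      refine le_iInf₂ fun x hx => le_iInf₂ fun y hy => ?_
      rw [edist_dist]
      exact ENNReal.ofReal_le_ofReal (key x hx y hy)
    refine lt_of_lt_of_le ?_ hle
    rw [ENNReal.ofReal_lt_ofReal_iff (by positivity)]
    linarith
  · -- covers
    intro x
    obtain ⟨hxn, hmem⟩ := hidx x
    obtain ⟨hsupp, hcard⟩ := hmem
    have hVcard : ({c : Fin (k + 1) | ∃ j, InGap k n r (c : ℕ) (ptOf x j)}).ncard ≤ k := by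
      have hOffFin : ({j | j < idxOf x ∧ ¬ IsMultiple n (ptOf x j)}).Finite :=
        (Set.finite_Iio (idxOf x)).subset (fun j hj => hj.1)
      refine le_trans (Set.ncard_le_ncard_of_injOn
        (fun c : Fin (k + 1) =>
          if h : ∃ j, InGap k n r (c : ℕ) (ptOf x j) then h.choose else 0)
        ?_ ?_ hOffFin) hcard
      · rintro c hc
        simp only [Set.mem_setOf_eq] at hc
        show (if h : ∃ j, InGap k n r (c : ℕ) (ptOf x j) then h.choose else 0) ∈ _
        rw [dif_pos hc]
        have hspec := hc.choose_spec
        constructor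
        · by_contra hge
          push_neg at hge
          rw [hsupp _ hge] at hspec
          have h0 : (0 : ℝ) = ((0 : ℤ) : ℝ) * 2 ^ n := by norm_num
          rw [h0] at hspec
          exact grid_not_inGap hrn (Fin.is_le c) 0 hspec
        · rintro ⟨z, hz⟩
          rw [hz] at hspec
          exact grid_not_inGap hrn (Fin.is_le c) z hspec
      · intro c hc c' hc' heq
        simp only [Set.mem_setOf_eq] at hc hc'
        simp only at heq
        rw [dif_pos hc, dif_pos hc'] at heq
        have h1 := hc.choose_spec
        have h2 := hc'.choose_spec
        rw [heq] at h1
        exact Fin.ext (gap_disjoint hrn (Fin.is_le c) (Fin.is_le c') h1 h2)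
    have hVne : ({c : Fin (k + 1) | ∃ j, InGap k n r (c : ℕ) (ptOf x j)}) ≠ Set.univ := by
      intro h
      rw [h, Set.ncard_univ, Nat.card_eq_fintype_card, Fintype.card_fin] at hVcard
      omega
    obtain ⟨c, hc⟩ := (Set.ne_univ_iff_exists_notMem _).mp hVne
    have hng : ∀ j, ¬ InGap k n r (c : ℕ) (ptOf x j) := fun j hg => hc ⟨j, hg⟩
    exact ⟨c, SetF k n r (c : ℕ) (if idxOf x ≤ n + 1 then n else idxOf x)
        (fun j => ⌊(ptOf x j - oc n (c : ℕ) - Gc r) / Pc k n⌋),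
      ⟨_, _, rfl⟩, rfl, fun j => win_exists (hng j)⟩

end
end

section
/- For every k ∈ ℕ, coasdim(X_{ω+k}) ≤ ω + k. -/
open Metric Set Filter ENNReal

noncomputable section

open AsympPaper

namespace S6

open AsympPaper


/-- `t` lies in the `z`-th interval of color `m` (intervals of length `K*c`, period `(K+1)*c`). -/
def InIv (K m : ℕ) (c : ℝ) (z : ℤ) (t : ℝ) : Prop :=
  z * ((K + 1) * c) + m * c ≤ t ∧ t ≤ z * ((K + 1) * c) + m * c + K * c

/-- `t` lies in the (open) gap of color `m`. -/
def Bad (K m : ℕ) (c t : ℝ) : Prop :=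
  ∃ M : ℤ, ((K : ℤ) + 1) ∣ (M - (m + K)) ∧ M * c < t ∧ t < (M + 1) * c

lemma bad_unique {K m m' : ℕ} {c t : ℝ} (hc : 0 < c) (hm : m < K + 1) (hm' : m' < K + 1)
    (h : Bad K m c t) (h' : Bad K m' c t) : m = m' := by
  obtain ⟨M, hd, h1, h2⟩ := h
  obtain ⟨M', hd', h1', h2'⟩ := h'
  have e1 : (M : ℝ) * c < ((M' : ℝ) + 1) * c := h1.trans h2'
  have e2 : (M' : ℝ) * c < ((M : ℝ) + 1) * c := h1'.trans h2
  have f1 : (M : ℝ) < (M' : ℝ) + 1 := lt_of_mul_lt_mul_right e1 hc.le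
  have f2 : (M' : ℝ) < (M : ℝ) + 1 := lt_of_mul_lt_mul_right e2 hc.le
  have g1 : M < M' + 1 := by exact_mod_cast f1
  have g2 : M' < M + 1 := by exact_mod_cast f2
  have hMM : M = M' := by omega
  subst hMM
  obtain ⟨e, he⟩ := dvd_sub hd' hd
  have hsub : (m : ℤ) - m' = ((K : ℤ) + 1) * e := by linarith [he]
  have hb1 : (m : ℤ) - m' ≤ K := by omega
  have hb2 : -(K : ℤ) ≤ (m : ℤ) - m' := by omega
  have he0 : e = 0 := by
    rcases lt_trichotomy e 0 with h | h | h
    · nlinarith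
    · exact h
    · nlinarith
  rw [he0, mul_zero] at hsub
  omega

lemma not_bad_good {K m : ℕ} {c t : ℝ} (hc : 0 < c) (h : ¬ Bad K m c t) :
    ∃ z : ℤ, InIv K m c z t := by
  have hS0 : 0 < ((K : ℝ) + 1) * c := by positivity
  obtain ⟨z, hz1, hz2⟩ : ∃ z : ℤ, (z : ℝ) * (((K : ℝ) + 1) * c) ≤ t - m * c ∧
      t - m * c < ((z : ℝ) + 1) * (((K : ℝ) + 1) * c) := by
    refine ⟨⌊(t - m * c) / (((K : ℝ) + 1) * c)⌋, ?_, ?_⟩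
    · rw [← le_div_iff₀ hS0]
      exact Int.floor_le _
    · rw [← div_lt_iff₀ hS0]
      exact Int.lt_floor_add_one _
  refine ⟨z, by linarith [hz1], ?_⟩
  by_contra hcon
  push_neg at hcon
  apply h
  refine ⟨z * ((K : ℤ) + 1) + m + K, ⟨z, by ring⟩, ?_, ?_⟩
  · push_cast
    nlinarith [hcon]
  · push_cast
    nlinarith [hz2]

lemma mult_not_bad {K m : ℕ} {c t : ℝ} (hc : 0 < c) (h : ∃ a : ℤ, t = a * c) :
    ¬ Bad K m c t := by
  rintro ⟨M, -, h1, h2⟩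
  obtain ⟨a, rfl⟩ := h
  have l1 : M < a := by exact_mod_cast lt_of_mul_lt_mul_right h1 hc.le
  have l2 : (a : ℝ) < (M : ℝ) + 1 := lt_of_mul_lt_mul_right h2 hc.le
  have l3 : a < M + 1 := by exact_mod_cast l2
  omega

lemma iv_gap {K m : ℕ} {c t t' : ℝ} {z z' : ℤ} (hc : 0 < c) (h : InIv K m c z t)
    (h' : InIv K m c z' t') (hzz : z ≠ z') : c ≤ |t - t'| := by
  have key : ∀ (w w' : ℤ) (s s' : ℝ), w < w' → InIv K m c w s → InIv K m c w' s' →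
      c ≤ s' - s := by
    intro w w' s s' hww hw hw'
    have hcast : (w : ℝ) + 1 ≤ (w' : ℝ) := by exact_mod_cast hww
    have hmul : ((w : ℝ) + 1) * ((K + 1) * c) ≤ (w' : ℝ) * ((K + 1) * c) :=
      mul_le_mul_of_nonneg_right hcast (by positivity)
    nlinarith [hw.2, hw'.1]
  rcases lt_or_gt_of_ne hzz with hlt | hlt
  · have := key z z' t t' hlt h h'
    calc c ≤ t' - t := this
      _ ≤ |t - t'| := by rw [abs_sub_comm]; exact le_abs_self _
  · have := key z' z t' t hlt h' h
    exact this.trans (le_abs_self _)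

lemma iv_diam {K m : ℕ} {c t t' : ℝ} {z : ℤ} (h : InIv K m c z t) (h' : InIv K m c z t') :
    |t - t'| ≤ K * c := by
  rw [abs_sub_le_iff]
  constructor <;> [linarith [h.2, h'.1]; linarith [h'.2, h.1]]

lemma exists_good_color {K : ℕ} {c : ℝ} (hc : 0 < c) (t : ℕ → ℝ) (J : Set ℕ)
    (hJfin : J.Finite) (hJcard : J.ncard ≤ K)
    (hout : ∀ j ∉ J, ∀ m, ¬ Bad K m c (t j)) :
    ∃ m < K + 1, ∀ j, ¬ Bad K m c (t j) := by
  by_contra hcon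
  push_neg at hcon
  have hw : ∀ m : Fin (K + 1), ∃ j, Bad K (m : ℕ) c (t j) := by
    intro m
    obtain ⟨j, hj⟩ := hcon m m.2
    exact ⟨j, hj⟩
  choose w hwspec using hw
  have hwJ : ∀ m, w m ∈ J := by
    intro m
    by_contra hnot
    exact hout _ hnot _ (hwspec m)
  have hinj : Function.Injective w := by
    intro m m' hmm
    have : (m : ℕ) = (m' : ℕ) :=
      bad_unique hc m.2 m'.2 (hwspec m) (hmm ▸ hwspec m')
    exact Fin.ext this
  have hcard : K + 1 ≤ J.ncard := by
    have h1 : (Finset.univ.image w).card = K + 1 := by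
      rw [Finset.card_image_of_injective _ hinj, Finset.card_univ, Fintype.card_fin]
    have h2 : (Finset.univ.image w : Finset ℕ) ⊆ hJfin.toFinset := by
      intro j hj
      simp only [Finset.mem_image] at hj
      obtain ⟨m, -, rfl⟩ := hj
      exact hJfin.mem_toFinset.mpr (hwJ m)
    calc K + 1 = (Finset.univ.image w).card := h1.symm
      _ ≤ hJfin.toFinset.card := Finset.card_le_card h2
      _ = J.ncard := (Set.ncard_eq_toFinset_card J hJfin).symm
  omega


lemma triHalf_succ (n : ℕ) : triHalf (n + 1) = triHalf n + n := by
  unfold triHalf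
  have hb : (n + 1) * n = n * (n - 1) + 2 * n := by
    cases n with
    | zero => rfl
    | succ m => simp only [Nat.succ_sub_one]; ring
  have h2 : 2 ∣ n * (n - 1) := by
    cases n with
    | zero => simp
    | succ m => simpa [Nat.succ_sub_one, mul_comm] using (Nat.even_mul_succ_self m).two_dvd
  have key : (n + 1) * (n + 1 - 1) / 2 = n * (n - 1) / 2 + n := by
    simp only [Nat.add_sub_cancel]
    omega
  rw [key]
  push_cast
  ring

lemma triHalf_nonneg (n : ℕ) : 0 ≤ triHalf n := by
  unfold triHalf; positivity

lemma triHalf_gap {i j : ℕ} (h : i < j) : (i : ℝ) + triHalf i ≤ triHalf j := by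
  induction j with
  | zero => omega
  | succ m ih =>
    rcases Nat.lt_succ_iff_lt_or_eq.mp h with h' | h'
    · have h1 := ih h'
      have h2 := triHalf_succ m
      have h3 : (0 : ℝ) ≤ (m : ℝ) := Nat.cast_nonneg m
      linarith
    · subst h'
      rw [triHalf_succ]
      linarith

lemma triHalf_sep {i j i₀ : ℕ} (hi : i₀ ≤ i) (hj : i₀ ≤ j) (hne : i ≠ j) :
    (i₀ : ℝ) ≤ |triHalf i - triHalf j| := by
  have hnn := triHalf_nonneg i
  have hnn' := triHalf_nonneg j
  rcases lt_or_gt_of_ne hne with h | h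
  · have hg := triHalf_gap h
    have hci : (i₀ : ℝ) ≤ (i : ℝ) := Nat.cast_le.mpr hi
    rw [abs_sub_comm, abs_of_nonneg (by linarith)]
    linarith
  · have hg := triHalf_gap h
    have hcj : (i₀ : ℝ) ≤ (j : ℝ) := Nat.cast_le.mpr hj
    rw [abs_of_nonneg (by linarith)]
    linarith

lemma asdist_eq {Z : Type*} [PseudoMetricSpace Z] {S : ℕ → Set Z} (p q : AsUnion S) :
    dist p q = dist (p.pt : Z) (q.pt : Z) + |triHalf p.idx - triHalf q.idx| := rfl

lemma offset_le_dist {Z : Type*} [PseudoMetricSpace Z] {S : ℕ → Set Z} (p q : AsUnion S) :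
    |triHalf p.idx - triHalf q.idx| ≤ dist p q := by
  rw [asdist_eq]
  linarith [dist_nonneg (x := (p.pt : Z)) (y := (q.pt : Z))]

lemma coord_le_dist {S : ℕ → Set Amb} (p q : AsUnion S) (j : ℕ) :
    |(p.pt : Amb) j - (q.pt : Amb) j| ≤ dist p q := by
  rw [asdist_eq]
  have h1 : dist ((p.pt : Amb) j) ((q.pt : Amb) j) ≤ dist (p.pt : Amb) (q.pt : Amb) :=
    BoundedContinuousFunction.dist_coe_le_dist j
  rw [Real.dist_eq] at h1
  linarith [abs_nonneg (triHalf p.idx - triHalf q.idx)]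

lemma ofReal_lt_setEDist {X : Type*} [PseudoMetricSpace X] {U V : Set X} {r g : ℝ}
    (hrg : r < g) (hg : 0 < g) (h : ∀ a ∈ U, ∀ b ∈ V, g ≤ dist a b) :
    ENNReal.ofReal r < setEDist U V := by
  have hle : ENNReal.ofReal g ≤ setEDist U V := by
    refine le_iInf₂ fun a ha => le_iInf₂ fun b hb => ?_
    rw [edist_dist]
    exact ENNReal.ofReal_le_ofReal (h a ha b hb)
  exact lt_of_lt_of_le ((ENNReal.ofReal_lt_ofReal_iff hg).mpr hrg) hle

lemma pt_mem {k : ℕ} (p : XOmegaPlus k) :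
    ∃ x : Amb, (AsUnion.pt p : Amb) = x ∧ x ∈ (if AsUnion.idx p = 0 then (∅ : Set Amb)
      else XSet k (AsUnion.idx p) (AsUnion.idx p)) := ⟨_, rfl, (AsUnion.pt p).2⟩

lemma idx_ne_zero {k : ℕ} (p : XOmegaPlus k) : AsUnion.idx p ≠ 0 := by
  intro h0
  obtain ⟨x, -, hx⟩ := pt_mem p
  rw [if_pos h0] at hx
  exact Set.notMem_empty _ hx

lemma mem_XSet {k : ℕ} (p : XOmegaPlus k) :
    (AsUnion.pt p : Amb) ∈ XSet k (AsUnion.idx p) (AsUnion.idx p) := by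
  obtain ⟨x, hxe, hx⟩ := pt_mem p
  rw [hxe]
  rwa [if_neg (idx_ne_zero p)] at hx

lemma coord_zero {k : ℕ} (p : XOmegaPlus k) {j : ℕ} (hj : AsUnion.idx p ≤ j) :
    (AsUnion.pt p : Amb) j = 0 := (mem_XSet p).1 j hj

lemma low_coasdim (k i₀ : ℕ) (A : Set (XOmegaPlus k)) (hA : ∀ p ∈ A, AsUnion.idx p < i₀) :
    CoasdimLEAux A 0 (i₀ + 1) := by
  rw [CoasdimLEAux]
  intro r hr
  set K := i₀ + 1 with hK
  have hc : (0 : ℝ) < r + r := by linarith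
  set c : ℝ := r + r with hcdef
  set v : XOmegaPlus k → ℕ → ℝ := fun p j =>
    if j < i₀ then (AsUnion.pt p : Amb) j
    else if j = i₀ then triHalf (AsUnion.idx p) else 0 with hv
  have hvdist : ∀ p q : XOmegaPlus k, ∀ j, j ≤ i₀ → |v p j - v q j| ≤ dist p q := by
    intro p q j hj
    by_cases h1 : j < i₀
    · simp only [hv, if_pos h1]
      exact coord_le_dist p q j
    · have h2 : j = i₀ := by omega
      simp only [hv, if_neg h1, if_pos h2]
      exact offset_le_dist p q
  refine ⟨fun m => {U | ∃ z : ℕ → ℤ,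
      U = A ∩ {p | ∀ j ≤ i₀, InIv K (m : ℕ) c (z j) (v p j)}}, fun m => ⟨?_, ?_, ?_⟩, ?_⟩
  · -- subsets of A
    rintro U ⟨z, rfl⟩
    exact Set.inter_subset_left
  · -- uniformly bounded
    refine ⟨K * c + K * c, ?_⟩
    rintro U ⟨z, rfl⟩ x hx y hy
    have hxA := hx.1
    have hyA := hy.1
    have hx2 := hx.2
    have hy2 := hy.2
    have hoff : |triHalf (AsUnion.idx x) - triHalf (AsUnion.idx y)| ≤ K * c := by
      have h1 := hx2 i₀ le_rfl
      have h2 := hy2 i₀ le_rfl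
      simp only [hv, lt_irrefl, if_neg (lt_irrefl i₀), if_pos rfl] at h1 h2
      exact iv_diam h1 h2
    have hcoord : dist (AsUnion.pt x : Amb) (AsUnion.pt y : Amb) ≤ K * c := by
      rw [BoundedContinuousFunction.dist_le (by positivity)]
      intro j
      rw [Real.dist_eq]
      by_cases h1 : j < i₀
      · have ha := hx2 j h1.le
        have hb := hy2 j h1.le
        simp only [hv, if_pos h1] at ha hb
        exact iv_diam ha hb
      · have hx' : AsUnion.idx x < i₀ := hA x hxA
        have hy' : AsUnion.idx y < i₀ := hA y hyA
        rw [coord_zero x (by omega), coord_zero y (by omega)]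
        simp only [sub_zero, abs_zero]
        positivity
    rw [show dist x y = _ from asdist_eq x y]
    linarith
  · -- r-disjoint
    rintro U ⟨z, rfl⟩ V ⟨z', rfl⟩ hUV
    have hzz : ∃ j ≤ i₀, z j ≠ z' j := by
      by_contra hcon
      push_neg at hcon
      apply hUV
      have : {p : XOmegaPlus k | ∀ j ≤ i₀, InIv K (m : ℕ) c (z j) (v p j)}
          = {p : XOmegaPlus k | ∀ j ≤ i₀, InIv K (m : ℕ) c (z' j) (v p j)} := by
        ext p
        simp only [Set.mem_setOf_eq]
        constructor
        · intro h j hj; rw [← hcon j hj]; exact h j hj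
        · intro h j hj; rw [hcon j hj]; exact h j hj
      rw [this]
    obtain ⟨j₀, hj₀, hne⟩ := hzz
    refine ofReal_lt_setEDist (by linarith : r < c) hc ?_
    intro a ha b hb
    calc c ≤ |v a j₀ - v b j₀| := iv_gap hc (ha.2 j₀ hj₀) (hb.2 j₀ hj₀) hne
      _ ≤ dist a b := hvdist a b j₀ hj₀
  · -- covers A
    left
    rw [Set.eq_empty_iff_forall_notMem]
    rintro p ⟨hpA, hpU⟩
    apply hpU
    have hout : ∀ j ∉ Set.Iic i₀, ∀ m, ¬ Bad K m c (v p j) := by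
      intro j hj m
      have hj' : ¬ j < i₀ := by simp at hj; omega
      have hj'' : j ≠ i₀ := by simp at hj; omega
      simp only [hv, if_neg hj', if_neg hj'']
      exact mult_not_bad hc ⟨0, by norm_num⟩
    have hcard : (Set.Iic i₀).ncard ≤ K := by
      rw [← Finset.coe_Iic, Set.ncard_coe_finset, Nat.card_Iic]
    obtain ⟨m, hm, hgood⟩ := exists_good_color hc (v p) (Set.Iic i₀)
      (Set.finite_Iic i₀) hcard hout
    choose z hz using fun j => not_bad_good hc (hgood j)
    refine Set.mem_iUnion.mpr ⟨⟨m, hm⟩, Set.mem_sUnion.mpr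
      ⟨A ∩ {q | ∀ j ≤ i₀, InIv K m c (z j) (v q j)}, ⟨z, rfl⟩, hpA, fun j _ => hz j⟩⟩

end S6

open S6

/-- For every `k ∈ ℕ`, `coasdim(X_{ω+k}) ≤ ω + k`. -/
theorem statement_6 (k : ℕ) :
    CoasdimLE (Set.univ : Set (XOmegaPlus k)) (Ordinal.omega0 + (k : Ordinal.{0})) := by
  refine ⟨Ordinal.omega0, k, Or.inr Ordinal.isSuccLimit_omega0, rfl, ?_⟩
  rw [CoasdimLEAux]
  intro r hr
  obtain ⟨s, hs⟩ := pow_unbounded_of_one_lt (r * ((k : ℝ) + 1)) (by norm_num : (1 : ℝ) < 2)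
  set i₀ : ℕ := max s (⌈r⌉₊ + 1) with hi₀
  set c : ℝ := 2 ^ s / ((k : ℝ) + 1) with hcdef
  have hc : 0 < c := by rw [hcdef]; positivity
  have hrc : r < c := by
    rw [hcdef, lt_div_iff₀ (by positivity)]
    exact hs
  have hri₀ : r < (i₀ : ℝ) := by
    have h1 : r ≤ (⌈r⌉₊ : ℝ) := Nat.le_ceil r
    have h2 : (⌈r⌉₊ + 1 : ℕ) ≤ i₀ := le_max_right _ _
    have h2' : ((⌈r⌉₊ + 1 : ℕ) : ℝ) ≤ (i₀ : ℝ) := Nat.cast_le.mpr h2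
    push_cast at h2'
    linarith
  have hi₀pos : 1 ≤ i₀ := le_trans (by omega) (le_max_right s (⌈r⌉₊ + 1))
  set F : Fin (k + 1) → Set (Set (XOmegaPlus k)) := fun m =>
    {U | ∃ i, i₀ ≤ i ∧ ∃ z : ℕ → ℤ,
      U = {p : XOmegaPlus k | AsUnion.idx p = i ∧
        ∀ j < i, InIv k (m : ℕ) c (z j) ((AsUnion.pt p : Amb) j)}} with hF
  have hcover : ∀ p : XOmegaPlus k, i₀ ≤ AsUnion.idx p → p ∈ ⋃ m, ⋃₀ F m := by
    intro p hp
    have hsi : s ≤ AsUnion.idx p := le_trans (le_max_left _ _) hp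
    have hXp := mem_XSet p
    have hout : ∀ j ∉ {j | j < AsUnion.idx p ∧ ¬ IsMultiple (AsUnion.idx p)
        ((AsUnion.pt p : Amb) j)}, ∀ m, ¬ Bad k m c
        (if j < AsUnion.idx p then (AsUnion.pt p : Amb) j else 0) := by
      intro j hj m
      simp only [Set.mem_setOf_eq, not_and, not_not] at hj
      by_cases h1 : j < AsUnion.idx p
      · rw [if_pos h1]
        obtain ⟨a, ha⟩ := hj h1
        refine mult_not_bad hc ⟨a * 2 ^ (AsUnion.idx p - s) * ((k : ℤ) + 1), ?_⟩
        rw [ha, hcdef]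
        have h2 : (2 : ℝ) ^ (AsUnion.idx p) = 2 ^ (AsUnion.idx p - s) * 2 ^ s := by
          rw [← pow_add]; congr 1; omega
        push_cast
        rw [h2]
        field_simp
      · rw [if_neg h1]
        exact mult_not_bad hc ⟨0, by norm_num⟩
    have hJfin : {j | j < AsUnion.idx p ∧ ¬ IsMultiple (AsUnion.idx p)
        ((AsUnion.pt p : Amb) j)}.Finite :=
      (Set.finite_Iio (AsUnion.idx p)).subset fun j hj => hj.1
    obtain ⟨m, hm, hgood⟩ := exists_good_color hc
      (fun j => if j < AsUnion.idx p then (AsUnion.pt p : Amb) j else 0) _ hJfin hXp.2 hout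
    choose z hz using fun j => not_bad_good hc (hgood j)
    refine Set.mem_iUnion.mpr ⟨⟨m, hm⟩, Set.mem_sUnion.mpr
      ⟨{p' : XOmegaPlus k | AsUnion.idx p' = AsUnion.idx p ∧
        ∀ j < AsUnion.idx p, InIv k ((⟨m, hm⟩ : Fin (k + 1)) : ℕ) c (z j)
          ((AsUnion.pt p' : Amb) j)}, ?_, rfl, ?_⟩⟩
    · rw [hF]
      exact ⟨AsUnion.idx p, hp, z, rfl⟩
    · intro j hj
      have h3 := hz j
      rwa [if_pos hj] at h3
  refine ⟨F, fun m => ⟨fun U _ => Set.subset_univ U, ?_, ?_⟩, ?_⟩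
  · -- uniformly bounded
    refine ⟨(k : ℝ) * c, ?_⟩
    rintro U hU x hx y hy
    rw [hF] at hU
    obtain ⟨i, hi, z, rfl⟩ := hU
    have hoff : triHalf (AsUnion.idx x) - triHalf (AsUnion.idx y) = 0 := by
      rw [hx.1, hy.1, sub_self]
    rw [show dist x y = _ from asdist_eq x y, hoff, abs_zero, add_zero,
      BoundedContinuousFunction.dist_le (by positivity)]
    intro j
    rw [Real.dist_eq]
    by_cases h1 : j < i
    · exact iv_diam (hx.2 j h1) (hy.2 j h1)
    · rw [coord_zero x (hx.1.le.trans (by omega)), coord_zero y (hy.1.le.trans (by omega))]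
      simp only [sub_zero, abs_zero]
      positivity
  · -- r-disjoint
    rintro U hU V hV hUV
    rw [hF] at hU hV
    obtain ⟨i, hi, z, rfl⟩ := hU
    obtain ⟨i', hi', z', rfl⟩ := hV
    by_cases hii : i = i'
    · subst hii
      have hzz : ∃ j < i, z j ≠ z' j := by
        by_contra hcon
        push_neg at hcon
        apply hUV
        ext p
        simp only [Set.mem_setOf_eq]
        constructor
        · rintro ⟨h1, h2⟩
          refine ⟨h1, fun j hj => ?_⟩
          rw [← hcon j hj]
          exact h2 j hj
        · rintro ⟨h1, h2⟩
          refine ⟨h1, fun j hj => ?_⟩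
          rw [hcon j hj]
          exact h2 j hj
      obtain ⟨j₀, hj₀, hne⟩ := hzz
      refine ofReal_lt_setEDist hrc hc ?_
      intro a ha b hb
      calc c ≤ |(AsUnion.pt a : Amb) j₀ - (AsUnion.pt b : Amb) j₀| :=
            iv_gap hc (ha.2 j₀ hj₀) (hb.2 j₀ hj₀) hne
        _ ≤ dist a b := coord_le_dist a b j₀
    · refine ofReal_lt_setEDist hri₀ (Nat.cast_pos.mpr hi₀pos) ?_
      intro a ha b hb
      calc (i₀ : ℝ) ≤ |triHalf (AsUnion.idx a) - triHalf (AsUnion.idx b)| :=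
            triHalf_sep (by rw [ha.1]; exact hi) (by rw [hb.1]; exact hi')
              (by rw [ha.1, hb.1]; exact hii)
        _ ≤ dist a b := offset_le_dist a b
  · -- remainder has finite asymptotic dimension
    right
    refine ⟨⟨(0, i₀ + 1), ?_, Or.inl rfl⟩, ?_⟩
    · simpa using Ordinal.nat_lt_omega0 (i₀ + 1)
    · apply low_coasdim
      intro p hp
      by_contra hcon
      push_neg at hcon
      exact hp.2 (hcover p hcon)

end
end
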